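/- Suppose the images π(x_i), i ∈ I, are pairwise distinct in T^n, and define deg on X(F^•)_0 by assigning to the 0-simplex [x_i] mod ℤ^n the integer deg(i). Then X = X(F^•) satisfies: (1) an edge [x,y] mod ℤ^n belongs to X_1 if and only if for some k there exist x_0 = x, x_1, …, x_k = y ∈ ℝ^n with [x_i] mod ℤ^n ∈ X_0 for all i and, for each 1 ≤ i ≤ k, [x_{i−1}, x_i] mod ℤ^n ∈ X_1 of degree one (meaning deg([x_i] mod ℤ^n) − deg([x_{i−1}] mod ℤ^n) = 1); and (2) for k > 1, a k-simplex [x_0, …, x_k] mod ℤ^n belongs to X_k if and only if [x_i] mod ℤ^n ∈ X_0 for all 0 ≤ i ≤ k and [x_{i−1}, x_i] mod ℤ^n ∈ X_1 for all 1 ≤ i ≤ k. -/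

import Mathlib

open scoped BigOperators
open MeasureTheory

noncomputable section

/-- `ℤ^n`, the exponent lattice. -/
abbrev Zn (n : ℕ) : Type := Fin n → ℤ

/-- `ℝ^n`. -/
abbrev Rn (n : ℕ) : Type := Fin n → ℝ

/-- The Laurent polynomial ring `R_n = ℂ[z_1^{±1},…,z_n^{±1}]`, realized as the group
algebra of `ℤ^n` over `ℂ`. -/
abbrev LaurentRing (n : ℕ) : Type := AddMonoidAlgebra ℂ (Zn n)

/-- The embedding `ℤ^n → ℝ^n`. -/
def zToR {n : ℕ} (m : Zn n) : Rn n := fun j => (m j : ℝ)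

/-- A bounded based sequence `F^•` of finite-rank free `R_n`-modules: a finite index set
`I = ⊔_k I_k` (with `I_k = ∅` for `k > 0` and `I_0 ≠ ∅`), recorded via a degree function,
together with the matrix entries `d^k_{ij} ∈ R_n` of the maps `F^k → F^{k+1}`. -/
structure BasedSeq (n : ℕ) where
  I : Type
  fintypeI : Fintype I
  deg : I → ℤ
  deg_nonpos : ∀ i, deg i ≤ 0
  exists_deg_zero : ∃ i, deg i = 0
  d : I → I → LaurentRing n
  d_eq_zero : ∀ i j, deg i ≠ deg j + 1 → d i j = 0

attribute [instance] BasedSeq.fintypeI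

/-- Chains witnessing membership in `E_{ij}`: `EChain F i j m` holds iff there is a chain
`j = i_0, i_1, …, i_k = i` with `deg i_ℓ = deg i_{ℓ-1} + 1` at each step, exponents
`m_ℓ` in the support of the corresponding matrix entry, and `m = m_1 + ⋯ + m_k`. -/
inductive EChain {n : ℕ} (F : BasedSeq n) : F.I → F.I → Zn n → Prop where
  | base {i j : F.I} {m : Zn n} :
      F.deg i = F.deg j + 1 → m ∈ (F.d i j).coeff.support → EChain F i j m
  | step {i j k : F.I} {m m' : Zn n} :
      EChain F j k m → F.deg i = F.deg j + 1 → m' ∈ (F.d i j).coeff.support →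
      EChain F i k (m + m')

/-- The subset `E_{ij} ⊆ ℤ^n`. -/
def Eset {n : ℕ} (F : BasedSeq n) (i j : F.I) : Set (Zn n) := {m | EChain F i j m}

/-- The condition `(m_1, …, m_k) ∈ E_{i_1 i_0} × ⋯ × E_{i_k i_{k-1}}`. -/
def goodTuple {n : ℕ} (F : BasedSeq n) {k : ℕ} (c : Fin (k + 1) → F.I)
    (m : Fin k → Zn n) : Prop :=
  ∀ ℓ : Fin k, m ℓ ∈ Eset F (c ℓ.succ) (c ℓ.castSucc)

/-- The vertex tuple `(x_{i_0}, x_{i_1}+m_1, …, x_{i_k}+m_1+⋯+m_k)` in `ℝ^n`. -/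
def vtx {n : ℕ} (F : BasedSeq n) (x : F.I → Rn n) {k : ℕ}
    (c : Fin (k + 1) → F.I) (m : Fin k → Zn n) : Fin (k + 1) → Rn n :=
  fun a => x (c a) + zToR (∑ ℓ ∈ Finset.univ.filter (fun ℓ : Fin k => (ℓ : ℕ) < (a : ℕ)), m ℓ)

/-- Membership in `X(F^•)_k`: the tuple `y` represents (mod a common `ℤ^n`-translation `t`)
one of the linear `k`-simplices `[x_{i_0}, x_{i_1}+m_1, …, x_{i_k}+m_1+⋯+m_k] mod ℤ^n`. -/
def InX {n : ℕ} (F : BasedSeq n) (x : F.I → Rn n) (k : ℕ)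
    (y : Fin (k + 1) → Rn n) : Prop :=
  ∃ (c : Fin (k + 1) → F.I) (m : Fin k → Zn n) (t : Zn n),
    goodTuple F c m ∧ ∀ a, y a = vtx F x c m a + zToR t

/-- The integer lattice `ℤ^n ⊆ ℝ^n` as an additive subgroup. -/
def intLattice (n : ℕ) : AddSubgroup (Rn n) :=
  AddSubgroup.pi Set.univ fun _ => AddSubgroup.zmultiples (1 : ℝ)

/-- The torus `T^n = ℝ^n/ℤ^n`. -/
abbrev Torus (n : ℕ) := Rn n ⧸ intLattice n

/-- The projection `π : ℝ^n → T^n`. -/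
def toTorus {n : ℕ} : Rn n → Torus n := QuotientAddGroup.mk

/-- The tropical Lagrangian coamoeba `T(F^•) ⊆ T^n`. -/
def TropT {n : ℕ} (F : BasedSeq n) (x : F.I → Rn n) : Set (Torus n) :=
  ⋃ (k : ℕ), ⋃ (c : Fin (k + 1) → F.I), ⋃ (m : Fin k → Zn n), ⋃ (_ : goodTuple F c m),
    toTorus '' convexHull ℝ (Set.range (vtx F x c m))

/-- The subset `S_i ⊆ ℝ^n`. -/
def Sset {n : ℕ} (F : BasedSeq n) (x : F.I → Rn n) (i : F.I) : Set (Rn n) :=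
  ⋃ (k : ℕ), ⋃ (c : Fin (k + 1) → F.I), ⋃ (m : Fin k → Zn n),
    ⋃ (_ : c 0 = i ∧ goodTuple F c m), convexHull ℝ (Set.range (vtx F x c m))

/-- `[x, S] = {t·x + (1−t)·y : y ∈ S, t ∈ [0,1]}`. -/
def joinSet {n : ℕ} (x : Rn n) (S : Set (Rn n)) : Set (Rn n) :=
  {p | ∃ y ∈ S, ∃ t ∈ Set.Icc (0 : ℝ) 1, p = t • x + (1 - t) • y}

section Stmt6Aux

variable {n : ℕ}

lemma zToR_add (a b : Zn n) : zToR (a + b) = zToR a + zToR b := by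
  funext j; simp [zToR]

lemma zToR_zero : zToR (0 : Zn n) = 0 := by funext j; simp [zToR]

lemma zToR_sub (a b : Zn n) : zToR (a - b) = zToR a - zToR b := by
  funext j; simp [zToR]

lemma zToR_inj {a b : Zn n} (h : zToR a = zToR b) : a = b := by
  funext j; have := congrFun h j; simpa [zToR] using this

lemma EChain.trans' {F : BasedSeq n} {i j : F.I} {m : Zn n} (h1 : EChain F i j m) :
    ∀ {k : F.I} {m' : Zn n}, EChain F k i m' → EChain F k j (m + m') := by
  intro k m' h2
  induction h2 with
  | base hd hm => exact EChain.step h1 hd hm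
  | step h hd hm ih =>
      rw [← add_assoc]
      exact EChain.step (ih h1) hd hm

lemma key_eq {F : BasedSeq n} {x : F.I → Rn n}
    (hdist : ∀ (i j : F.I) (t : Zn n), x i = x j + zToR t → i = j)
    {i j : F.I} {t s : Zn n} (h : x i + zToR t = x j + zToR s) : i = j ∧ t = s := by
  have hij : i = j := by
    apply hdist i j (s - t)
    rw [zToR_sub]
    have h2 : x i = x j + zToR s - zToR t := by rw [← h]; abel
    rw [h2]; abel
  subst hij
  refine ⟨rfl, zToR_inj ?_⟩
  exact add_left_cancel h

lemma sum_filter_lt_succ {M : Type*} [AddCommMonoid M] {N : ℕ} (m : Fin N → M) (a : Fin N) :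
    ∑ ℓ ∈ Finset.univ.filter (fun ℓ : Fin N => (ℓ : ℕ) < ((a.succ : Fin (N+1)) : ℕ)), m ℓ
      = m a + ∑ ℓ ∈ Finset.univ.filter (fun ℓ : Fin N => (ℓ : ℕ) < ((a.castSucc : Fin (N+1)) : ℕ)), m ℓ := by
  have hfe : Finset.univ.filter (fun ℓ : Fin N => (ℓ : ℕ) < ((a.succ : Fin (N+1)) : ℕ))
      = insert a (Finset.univ.filter (fun ℓ : Fin N => (ℓ : ℕ) < ((a.castSucc : Fin (N+1)) : ℕ))) := by
    ext ℓ
    simp [Fin.ext_iff]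
    omega
  rw [hfe, Finset.sum_insert (by simp)]

lemma telescope {M : Type*} [AddCommGroup M] {N : ℕ} (g : Fin (N + 1) → M) (a : Fin (N + 1)) :
    ∑ ℓ ∈ Finset.univ.filter (fun ℓ : Fin N => (ℓ : ℕ) < (a : ℕ)), (g ℓ.succ - g ℓ.castSucc)
      = g a - g 0 := by
  induction a using Fin.induction with
  | zero => simp
  | succ b ih =>
      rw [sum_filter_lt_succ, ih]
      abel

lemma sum_fin_one (m : Fin 1 → Zn n) :
    ∑ ℓ ∈ Finset.univ.filter (fun ℓ : Fin 1 => (ℓ : ℕ) < 1), m ℓ = m 0 := by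
  rw [Finset.filter_true_of_mem (fun ℓ _ => by omega)]
  exact Fin.sum_univ_one m

lemma inX_zero_iff {F : BasedSeq n} {x : F.I → Rn n} (p : Rn n) :
    InX F x 0 ![p] ↔ ∃ (i : F.I) (t : Zn n), p = x i + zToR t := by
  constructor
  · rintro ⟨c, m, t, -, h⟩
    refine ⟨c 0, t, ?_⟩
    have := h 0
    simpa [vtx, zToR_zero] using this
  · rintro ⟨i, t, h⟩
    refine ⟨fun _ => i, fun a => a.elim0, t, fun ℓ => ℓ.elim0, fun a => ?_⟩
    fin_cases a
    simpa [vtx, zToR_zero] using h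

lemma inX_one_iff {F : BasedSeq n} {x : F.I → Rn n} {p q : Rn n} :
    InX F x 1 ![p, q] ↔ ∃ (i j : F.I) (μ t : Zn n),
      EChain F j i μ ∧ p = x i + zToR t ∧ q = x j + zToR (μ + t) := by
  constructor
  · rintro ⟨c, m, t, hg, h⟩
    refine ⟨c 0, c 1, m 0, t, hg 0, ?_, ?_⟩
    · have := h 0
      simpa [vtx, zToR_zero] using this
    · have h1 := h 1
      simp only [vtx, Matrix.cons_val_one, Matrix.head_cons, Fin.val_one, Matrix.cons_val_zero] at h1
      rw [sum_fin_one m] at h1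
      rw [h1, zToR_add]
      abel
  · rintro ⟨i, j, μ, t, hch, hp, hq⟩
    refine ⟨![i, j], fun _ => μ, t, ?_, ?_⟩
    · intro ℓ
      fin_cases ℓ
      simpa [Eset] using hch
    · rw [Fin.forall_fin_two]
      constructor
      · simpa [vtx, zToR_zero] using hp
      · simp only [vtx, Matrix.cons_val_one, Matrix.head_cons, Fin.val_one, Matrix.cons_val_zero]
        rw [sum_fin_one (fun _ => μ), hq, zToR_add]
        abel

end Stmt6Aux

section Stmt6Aux2

variable {n : ℕ}

lemma inX_one_trans {F : BasedSeq n} {x : F.I → Rn n}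
    (hdist : ∀ (i j : F.I) (t : Zn n), x i = x j + zToR t → i = j)
    {p q r : Rn n} (h1 : InX F x 1 ![p, q]) (h2 : InX F x 1 ![q, r]) :
    InX F x 1 ![p, r] := by
  rw [inX_one_iff] at h1 h2 ⊢
  obtain ⟨i, j, μ, t, hch, hp, hq⟩ := h1
  obtain ⟨i', j', μ', t', hch', hq', hr⟩ := h2
  obtain ⟨hji, hts⟩ := key_eq hdist (hq.symm.trans hq')
  subst hji
  subst hts
  refine ⟨i, j', μ + μ', t, hch.trans' hch', hp, ?_⟩
  rw [hr, show μ' + (μ + t) = μ + μ' + t from by abel]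

lemma path_trans {F : BasedSeq n} {x : F.I → Rn n}
    (hdist : ∀ (i j : F.I) (t : Zn n), x i = x j + zToR t → i = j) :
    ∀ {k : ℕ} (c : Fin (k + 2) → Rn n),
      (∀ a : Fin (k + 1), InX F x 1 ![c a.castSucc, c a.succ]) →
      InX F x 1 ![c 0, c (Fin.last (k + 1))] := by
  intro k
  induction k with
  | zero =>
      intro c h
      simpa using h 0
  | succ k ih =>
      intro c h
      have h1 : InX F x 1 ![c 0, c (Fin.last (k + 1)).castSucc] := by
        have := ih (fun b => c b.castSucc) (fun a => ?_)
        · simpa using this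
        · have := h a.castSucc
          rw [Fin.succ_castSucc] at this; exact this
      have h2 : InX F x 1 ![c (Fin.last (k + 1)).castSucc, c (Fin.last (k + 2))] := by
        have := h (Fin.last (k + 1))
        simpa [Fin.succ_last] using this
      exact inX_one_trans hdist h1 h2

/-- Path property appearing in statement (1). -/
def GoodPath {n : ℕ} (F : BasedSeq n) (x : F.I → Rn n) {k : ℕ}
    (c : Fin (k + 2) → Rn n) : Prop :=
  (∀ a, InX F x 0 ![c a]) ∧
    ∀ a : Fin (k + 1), InX F x 1 ![c a.castSucc, c a.succ] ∧
      ∃ (i j : F.I) (t t' : Zn n), c a.castSucc = x j + zToR t ∧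
        c a.succ = x i + zToR t' ∧ F.deg i = F.deg j + 1

lemma goodPath_snoc {F : BasedSeq n} {x : F.I → Rn n} {k : ℕ}
    {c : Fin (k + 2) → Rn n} (hc : GoodPath F x c) {q' : Rn n}
    (hv : InX F x 0 ![q'])
    (he : InX F x 1 ![c (Fin.last (k + 1)), q'])
    (hw : ∃ (i j : F.I) (t t' : Zn n), c (Fin.last (k + 1)) = x j + zToR t ∧
        q' = x i + zToR t' ∧ F.deg i = F.deg j + 1) :
    GoodPath F x (Fin.snoc c q' : Fin (k + 3) → Rn n) := by
  constructor
  · intro a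
    refine Fin.lastCases ?_ ?_ a
    · rw [Fin.snoc_last]; exact hv
    · intro b; rw [Fin.snoc_castSucc]; exact hc.1 b
  · intro a
    refine Fin.lastCases ?_ ?_ a
    · simp only [Fin.succ_last, Fin.snoc_castSucc, Fin.snoc_last]
      exact ⟨he, hw⟩
    · intro b
      simp only [Fin.succ_castSucc, Fin.snoc_castSucc]
      exact hc.2 b

lemma echain_path {F : BasedSeq n} (x : F.I → Rn n) {i j : F.I} {μ : Zn n}
    (h : EChain F i j μ) (t : Zn n) :
    ∃ (k : ℕ) (c : Fin (k + 2) → Rn n), c 0 = x j + zToR t ∧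
      c (Fin.last (k + 1)) = x i + zToR (μ + t) ∧ GoodPath F x c := by
  induction h with
  | @base a b m hd hm =>
      refine ⟨0, ![x b + zToR t, x a + zToR (m + t)], rfl, rfl, ?_, ?_⟩
      · intro v
        fin_cases v
        · exact (inX_zero_iff _).2 ⟨b, t, rfl⟩
        · exact (inX_zero_iff _).2 ⟨a, m + t, rfl⟩
      · intro e
        fin_cases e
        refine ⟨(inX_one_iff).2 ⟨b, a, m, t, EChain.base hd hm, ?_, ?_⟩, a, b, t, m + t, ?_, ?_, hd⟩ <;>
          simp
  | @step a b c0 m m' hint hd hm ih =>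
      obtain ⟨k, cc, h0, hl, hgp⟩ := ih
      refine ⟨k + 1, Fin.snoc cc (x a + zToR (m + m' + t)), ?_, ?_, ?_⟩
      · rw [show (0 : Fin (k + 3)) = Fin.castSucc 0 from rfl, Fin.snoc_castSucc]
        exact h0
      · rw [Fin.snoc_last]
      · refine goodPath_snoc hgp ((inX_zero_iff _).2 ⟨a, m + m' + t, rfl⟩) ?_ ?_
        · exact (inX_one_iff).2 ⟨b, a, m', m + t, EChain.base hd hm, hl,
            by rw [show m' + (m + t) = m + m' + t from by abel]⟩
        · exact ⟨a, b, m + t, m + m' + t, hl, rfl, hd⟩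

end Stmt6Aux2

/-- if the `π(x_i)` are pairwise distinct then `X(F^•)` satisfies the
generating conditions (1) and (2): edges are generated by degree-one edges, and higher
simplices by vertices and edges. -/
theorem stmt6 (n : ℕ) (hn : 1 ≤ n) (F : BasedSeq n) (x : F.I → Rn n)
    (hdist : ∀ (i j : F.I) (t : Zn n), x i = x j + zToR t → i = j) :
    (∀ p q : Rn n, InX F x 1 ![p, q] ↔
      ∃ (k : ℕ) (c : Fin (k + 2) → Rn n), c 0 = p ∧ c (Fin.last (k + 1)) = q ∧
        (∀ a, InX F x 0 ![c a]) ∧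
        ∀ a : Fin (k + 1), InX F x 1 ![c a.castSucc, c a.succ] ∧
          ∃ (i j : F.I) (t t' : Zn n), c a.castSucc = x j + zToR t ∧
            c a.succ = x i + zToR t' ∧ F.deg i = F.deg j + 1) ∧
    (∀ (k : ℕ) (y : Fin (k + 3) → Rn n), InX F x (k + 2) y ↔
      (∀ a, InX F x 0 ![y a]) ∧
        ∀ a : Fin (k + 2), InX F x 1 ![y a.castSucc, y a.succ]) := by
  constructor
  · intro p q
    constructor
    · intro h
      rw [inX_one_iff] at h
      obtain ⟨i, j, μ, t, hch, hp, hq⟩ := h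
      obtain ⟨k, c, h0, hl, hgp⟩ := echain_path x hch t
      exact ⟨k, c, h0.trans hp.symm, hl.trans hq.symm, hgp.1, hgp.2⟩
    · rintro ⟨k, c, hp, hq, hv, he⟩
      have h := path_trans hdist c (fun a => (he a).1)
      rw [hp, hq] at h
      exact h
  · intro k y
    constructor
    · rintro ⟨c, m, t, hg, h⟩
      constructor
      · intro a
        refine (inX_zero_iff _).2 ⟨c a,
          (∑ ℓ ∈ Finset.univ.filter (fun ℓ : Fin (k + 2) => (ℓ : ℕ) < (a : ℕ)), m ℓ) + t, ?_⟩
        rw [h a, zToR_add]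
        simp [vtx, add_assoc]
      · intro a
        refine (inX_one_iff).2 ⟨c a.castSucc, c a.succ, m a,
          (∑ ℓ ∈ Finset.univ.filter
            (fun ℓ : Fin (k + 2) => (ℓ : ℕ) < ((a.castSucc : Fin (k + 3)) : ℕ)), m ℓ) + t,
          hg a, ?_, ?_⟩
        · rw [h a.castSucc, zToR_add]
          simp [vtx, add_assoc]
        · rw [h a.succ]
          simp only [vtx]
          rw [sum_filter_lt_succ m a, zToR_add, zToR_add, zToR_add]
          abel
    · rintro ⟨hv, he⟩
      choose i t ht using fun a => (inX_zero_iff (y a)).1 (hv a)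
      have hstep : ∀ a : Fin (k + 2),
          EChain F (i a.succ) (i a.castSucc) (t a.succ - t a.castSucc) := by
        intro a
        obtain ⟨j, j', μ, s, hch, h1, h2⟩ := (inX_one_iff).1 (he a)
        obtain ⟨e1, e2⟩ := key_eq hdist ((ht a.castSucc).symm.trans h1)
        obtain ⟨e3, e4⟩ := key_eq hdist ((ht a.succ).symm.trans h2)
        rw [e1, e3, show t a.succ - t a.castSucc = μ from by rw [e4, e2]; abel]
        exact hch
      refine ⟨i, fun a => t a.succ - t a.castSucc, t 0, fun a => hstep a, ?_⟩
      intro a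
      rw [ht a]
      simp only [vtx]
      rw [telescope t a, zToR_sub]
      abel

end
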